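/- On a (β,φ)-Kenmotsu quadratic metric manifold (M,g,∇,φ,ξ,η), the Nijenhuis torsion of φ vanishes identically: N_φ(X,Y) = φ²[X,Y] + [φX,φY] − φ[φX,Y] − φ[X,φY] = 0 for all vector fields X,Y. -/
import Mathlib


/-- On a `(β,φ)`-Kenmotsu quadratic metric manifold `(M,g,∇,φ,ξ,η)`
(`φξ = 0`, `η(ξ) = 1`, `η = g(·,ξ)`, `φ² = pφ + q(I − η⊗ξ)`, `g(φX,Y) = g(X,φY)`,
`(∇_X φ)Y = β{g(X,φY)ξ + η(Y)φX}`, hence `∇_X ξ = −β(X−η(X)ξ)` and `dη = 0`),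
the Nijenhuis torsion of `φ` vanishes identically:
`N_φ(X,Y) = φ²[X,Y] + [φX,φY] − φ[φX,Y] − φ[X,φY] = 0`. -/
theorem Kenmotsu_quadratic_Nijenhuis_vanishes
    {A V : Type*} [CommRing A] [Algebra ℝ A]
    [AddCommGroup V] [Module A V] [Module ℝ V] [IsScalarTower ℝ A V]
    (g : V →ₗ[A] V →ₗ[A] A)
    (hgsym : ∀ X Y, g X Y = g Y X)
    (D : V → A → A)
    (bracket : V → V → V)
    (nabla : V → V → V)
    (hnablaAdd : ∀ X Y Z, nabla X (Y + Z) = nabla X Y + nabla X Z)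
    (hLeibniz : ∀ X (c : A) Y, nabla X (c • Y) = D X c • Y + c • nabla X Y)
    (hD1 : ∀ X, D X 1 = 0)
    (hmetric : ∀ X Y Z, D X (g Y Z) = g (nabla X Y) Z + g Y (nabla X Z))
    (htorsionfree : ∀ X Y, nabla X Y - nabla Y X = bracket X Y)
    (φ : V →ₗ[A] V) (ξ : V) (η : V → A) (p q : ℝ) (hq : q ≠ 0)
    (hη : ∀ X, η X = g X ξ)
    (hφξ : φ ξ = 0) (hηξ : η ξ = 1)
    (hφ2 : ∀ X, φ (φ X) = p • φ X + q • (X - η X • ξ))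
    (hcompat : ∀ X Y, g (φ X) Y = g X (φ Y))
    (β : A)
    (hKenmotsu : ∀ X Y, nabla X (φ Y) - φ (nabla X Y) = (β * g X (φ Y)) • ξ + (β * η Y) • φ X)
    (hnablaXi : ∀ X, nabla X ξ = -(β • (X - η X • ξ))) :
    ∀ X Y, φ (φ (bracket X Y)) + bracket (φ X) (φ Y)
        - φ (bracket (φ X) Y) - φ (bracket X (φ Y)) = 0 := by
  intro X Y
  have h1 : ∀ X Y, nabla X (φ Y) = (β * g X (φ Y)) • ξ + (β * η Y) • φ X + φ (nabla X Y) := by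
    intro X Y
    have h := hKenmotsu X Y
    rw [sub_eq_iff_eq_add] at h
    rw [h]
  rw [← htorsionfree, ← htorsionfree, ← htorsionfree, ← htorsionfree]
  simp only [h1, map_add, map_sub, map_smul, hφξ, smul_zero]
  rw [hgsym (φ X) (φ Y)]
  abel
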